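/- Let p ∈ [1/4, 3/4] and let B_i, B_j, R_i, R_j ∈ [0,1] satisfy B_i + B_j ≤ 1 and R_i + R_j ≤ 1. Let Z be the random variable taking value 0 with probability a = p·B_i + (1−p)·R_i, value 1 with probability b = p·B_j + (1−p)·R_j, and value 1/2 with probability 1 − a − b. Then the variance of Z is at least |R_i − B_i|/64; equivalently, with μ = b + (1−a−b)/2, a·μ² + b·(1−μ)² + (1−a−b)·(1/2−μ)² ≥ |R_i − B_i|/64. -/
import Mathlib

set_option maxHeartbeats 1000000


/- STATEMENT 12: Variance lower bound for the head-to-head voting variable: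
Var(Z) ≥ |R_i − B_i|/64. -/
theorem stmt_12
    (p Bi Bj Ri Rj : ℝ)
    (hp : 1 / 4 ≤ p) (hp' : p ≤ 3 / 4)
    (hBi : Bi ∈ Set.Icc (0 : ℝ) 1) (hBj : Bj ∈ Set.Icc (0 : ℝ) 1)
    (hRi : Ri ∈ Set.Icc (0 : ℝ) 1) (hRj : Rj ∈ Set.Icc (0 : ℝ) 1)
    (hBsum : Bi + Bj ≤ 1) (hRsum : Ri + Rj ≤ 1)
    (a b μ : ℝ)
    (ha : a = p * Bi + (1 - p) * Ri)
    (hb : b = p * Bj + (1 - p) * Rj)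
    (hμ : μ = b + (1 - a - b) / 2) :
    |Ri - Bi| / 64 ≤ a * μ ^ 2 + b * (1 - μ) ^ 2 + (1 - a - b) * (1 / 2 - μ) ^ 2 := by
  obtain ⟨hBi0, hBi1⟩ := hBi
  obtain ⟨hBj0, hBj1⟩ := hBj
  obtain ⟨hRi0, hRi1⟩ := hRi
  obtain ⟨hRj0, hRj1⟩ := hRj
  have ha0 : 0 ≤ a := by
    rw [ha]; nlinarith [mul_nonneg (by linarith : (0:ℝ) ≤ p) hBi0,
      mul_nonneg (by linarith : (0:ℝ) ≤ 1 - p) hRi0]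
  have hb0 : 0 ≤ b := by
    rw [hb]; nlinarith [mul_nonneg (by linarith : (0:ℝ) ≤ p) hBj0,
      mul_nonneg (by linarith : (0:ℝ) ≤ 1 - p) hRj0]
  have hble : b ≤ 1 - a := by
    rw [ha, hb]
    nlinarith [mul_nonneg (by linarith : (0:ℝ) ≤ p) (by linarith : (0:ℝ) ≤ 1 - Bi - Bj),
      mul_nonneg (by linarith : (0:ℝ) ≤ 1 - p) (by linarith : (0:ℝ) ≤ 1 - Ri - Rj)]
  have habs1 : |Ri - Bi| ≤ 4 * a := by
    rw [abs_le]
    constructor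
    · rw [ha]; nlinarith [mul_nonneg (by linarith : (0:ℝ) ≤ 1 - p) hRi0,
        mul_nonneg (by linarith : (0:ℝ) ≤ p - 1/4) hBi0]
    · rw [ha]; nlinarith [mul_nonneg (by linarith : (0:ℝ) ≤ p) hBi0,
        mul_nonneg (by linarith : (0:ℝ) ≤ 3/4 - p) hRi0]
  have habs2 : |Ri - Bi| ≤ 4 * (1 - a) := by
    rw [abs_le]
    constructor
    · rw [ha]; nlinarith [mul_nonneg (by linarith : (0:ℝ) ≤ 1 - p) (by linarith : (0:ℝ) ≤ 1 - Ri),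
        mul_nonneg (by linarith : (0:ℝ) ≤ p - 1/4) (by linarith : (0:ℝ) ≤ 1 - Bi)]
    · rw [ha]; nlinarith [mul_nonneg (by linarith : (0:ℝ) ≤ p) (by linarith : (0:ℝ) ≤ 1 - Bi),
        mul_nonneg (by linarith : (0:ℝ) ≤ 3/4 - p) (by linarith : (0:ℝ) ≤ 1 - Ri)]
  have ht1 : |Ri - Bi| ≤ 1 := by
    rw [abs_le]; constructor <;> linarith
  have ht0 : (0:ℝ) ≤ |Ri - Bi| := abs_nonneg _
  set t := |Ri - Bi| with htdef
  have key : a * μ ^ 2 + b * (1 - μ) ^ 2 + (1 - a - b) * (1 / 2 - μ) ^ 2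
      = ((a + b) * (1 - a - b) + 4 * a * b) / 4 := by
    rw [hμ]; ring
  rw [key]
  have h1 : 0 ≤ (4 * a - t) * (4 * (1 - a) - t) :=
    mul_nonneg (by linarith) (by linarith)
  have h1' : 16 * a * (1 - a) ≥ 4 * t - t ^ 2 := by nlinarith [h1]
  have h2 : 4 * t - t ^ 2 ≥ 3 * t := by nlinarith [mul_nonneg ht0 (by linarith : (0:ℝ) ≤ 1 - t)]
  have h3 : 0 ≤ b * (1 - a - b) := mul_nonneg hb0 (by linarith)
  have h4 : 0 ≤ a * b := mul_nonneg ha0 hb0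
  have h5 : (a + b) * (1 - a - b) + 4 * a * b = a * (1 - a) + b * (1 - a - b) + 3 * (a * b) := by
    ring
  nlinarith [h1', h2, h3, h4, h5]
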